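/- Let M be a 3-dimensional paracosymplectic manifold (a normal almost paracontact metric manifold with α = β = 0) and γ: I → M a slant Frenet curve of osculating order 3 with g(γ̇,γ̇) = ε₁ = ±1 and η(γ̇) = c constant. Then its curvature and torsion are κ = √|ε₁ − c²| · |δ| and τ = |cδ|, where δ = g(∇_{γ̇}γ̇, φγ̇)/|ε₁ − c²|. -/

import Mathlib

/-- The data, along a curve `γ : I → M`, of a 3-dimensional almost paracontact
metric manifold `(M, φ, ξ, η, g)`: the pullback tangent bundle is trivialized
over a real vector space `V`; `g t`, `phi t`, `xi t` are the metric, the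
structure tensor and the Reeb field at the point `γ t`, and `T t = γ̇(t)` is
the velocity of the curve.  The 1-form `η` is recovered as `η(v) = g v ξ`.
The axioms record: `η(ξ) = 1`, `φξ = 0`, `φ² = Id − η ⊗ ξ`,
`g(φv, φw) = −g(v,w) + η(v)η(w)`, symmetry of `g`, and that `g` has
signature `(2,1)` (an orthonormal basis with signs `(+,+,−)`). -/
structure APCMCurve (V : Type*) [AddCommGroup V] [Module ℝ V] where
  g : ℝ → V →ₗ[ℝ] V →ₗ[ℝ] ℝ
  phi : ℝ → V →ₗ[ℝ] V
  xi : ℝ → V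
  T : ℝ → V
  g_symm : ∀ t v w, g t v w = g t w v
  xi_unit : ∀ t, g t (xi t) (xi t) = 1
  phi_xi : ∀ t, phi t (xi t) = 0
  phi_sq : ∀ t v, phi t (phi t v) = v - g t v (xi t) • xi t
  compat : ∀ t v w, g t (phi t v) (phi t w) = -(g t v w) + g t v (xi t) * g t w (xi t)
  signature : ∀ t, ∃ e : Module.Basis (Fin 3) ℝ V,
    g t (e 0) (e 0) = 1 ∧ g t (e 1) (e 1) = 1 ∧ g t (e 2) (e 2) = -1 ∧
    g t (e 0) (e 1) = 0 ∧ g t (e 0) (e 2) = 0 ∧ g t (e 1) (e 2) = 0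

/-- The data, along a curve `γ`, of a 3-dimensional *normal* almost paracontact
metric manifold: in addition to `APCMCurve`, `D` is the covariant derivative
along `γ` (induced by the Levi-Civita connection `∇` of `g`), and
`a = α ∘ γ`, `b = β ∘ γ` are the compositions with `γ` of the structure
functions `α`, `β` of the normal structure (those with
`2α = Trace{X ↦ ∇_X ξ}`, `2β = Trace{X ↦ φ∇_X ξ}`), so that along `γ` one has
`∇_{γ̇} ξ = α(γ̇ − η(γ̇)ξ) + βφγ̇` (field `D_xi`) and
`(∇_{γ̇} φ)A = β(g(γ̇,A)ξ − η(A)γ̇) + α(g(φγ̇,A)ξ − η(A)φγ̇)` for every vector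
field `A` along `γ` (field `D_phi`).  `D` is additive, satisfies the Leibniz
rule and is metric-compatible. -/
structure NAPCMCurve (V : Type*) [AddCommGroup V] [Module ℝ V]
    extends APCMCurve V where
  D : (ℝ → V) → (ℝ → V)
  a : ℝ → ℝ
  b : ℝ → ℝ
  D_add : ∀ A B : ℝ → V, D (fun t => A t + B t) = fun t => D A t + D B t
  D_smul : ∀ (f : ℝ → ℝ) (A : ℝ → V) (t : ℝ), DifferentiableAt ℝ f t →
    D (fun s => f s • A s) t = deriv f t • A t + f t • D A t
  D_metric : ∀ (A B : ℝ → V) (t : ℝ),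
    HasDerivAt (fun s => g s (A s) (B s)) (g t (D A t) (B t) + g t (A t) (D B t)) t
  D_xi : ∀ t, D xi t = a t • (T t - g t (T t) (xi t) • xi t) + b t • phi t (T t)
  D_phi : ∀ (A : ℝ → V) (t : ℝ),
    D (fun s => phi s (A s)) t
      = b t • (g t (T t) (A t) • xi t - g t (A t) (xi t) • T t)
        + a t • (g t (phi t (T t)) (A t) • xi t - g t (A t) (xi t) • phi t (T t))
        + phi t (D A t)

/-- `γ` is a Frenet curve of osculating order 3: there are orthonormal fields
`E₁ = γ̇, E₂, E₃` along `γ` (with `g(Eᵢ,Eᵢ) = εᵢ = ±1`) and positive functions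
`κ` (curvature) and `τ` (torsion) with `∇_{γ̇}E₁ = κε₂E₂`,
`∇_{γ̇}E₂ = −κε₁E₁ + τε₃E₃` and `∇_{γ̇}E₃ = −τε₂E₂`. -/
structure FrenetOrder3 {V : Type*} [AddCommGroup V] [Module ℝ V]
    (M : NAPCMCurve V) where
  E2 : ℝ → V
  E3 : ℝ → V
  e2 : ℝ
  e3 : ℝ
  kappa : ℝ → ℝ
  tau : ℝ → ℝ
  he2 : e2 = 1 ∨ e2 = -1
  he3 : e3 = 1 ∨ e3 = -1
  kappa_pos : ∀ t, 0 < kappa t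
  tau_pos : ∀ t, 0 < tau t
  E2_unit : ∀ t, M.g t (E2 t) (E2 t) = e2
  E3_unit : ∀ t, M.g t (E3 t) (E3 t) = e3
  T_E2 : ∀ t, M.g t (M.T t) (E2 t) = 0
  T_E3 : ∀ t, M.g t (M.T t) (E3 t) = 0
  E2_E3 : ∀ t, M.g t (E2 t) (E3 t) = 0
  frenet1 : ∀ t, M.D M.T t = (kappa t * e2) • E2 t
  frenet2 : ∀ t, M.D E2 t
    = (-(kappa t) * M.g t (M.T t) (M.T t)) • M.T t + (tau t * e3) • E3 t
  frenet3 : ∀ t, M.D E3 t = (-(tau t) * e2) • E2 t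

/-- In a 3-dimensional paracosymplectic manifold (`α = β = 0`),
a slant Frenet curve of osculating order 3 has curvature `κ = √|ε₁−c²|·|δ|`
and torsion `τ = |cδ|`, where `δ = g(∇_{γ̇}γ̇, φγ̇)/|ε₁−c²|`. -/
theorem paracosymplectic_slant_curvature_torsion
    {V : Type*} [AddCommGroup V] [Module ℝ V]
    (M : NAPCMCurve V) (F : FrenetOrder3 M)
    (ha : ∀ t, M.a t = 0) (hb : ∀ t, M.b t = 0)
    (e1 c : ℝ) (he1 : e1 = 1 ∨ e1 = -1)
    (hT : ∀ t, M.g t (M.T t) (M.T t) = e1)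
    (hslant : ∀ t, M.g t (M.T t) (M.xi t) = c)
    (δ : ℝ → ℝ)
    (hδ : ∀ t, δ t = M.g t (M.D M.T t) (M.phi t (M.T t)) / |e1 - c ^ 2|) :
    ∀ t : ℝ,
      F.kappa t = Real.sqrt |e1 - c ^ 2| * |δ t| ∧
      F.tau t = |c * δ t| := by

  classical
  have hDxi : ∀ s, M.D M.xi s = 0 := by
    intro s
    rw [M.D_xi s, ha, hb]
    simp
  have hphixi : ∀ (s : ℝ) (v : V), M.g s (M.phi s v) (M.xi s) = 0 := by
    intro s v
    have h1 := M.compat s (M.phi s v) (M.phi s v)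
    have h2 := M.compat s v v
    rw [M.phi_sq s v] at h1
    have hsv : M.g s (M.xi s) v = M.g s v (M.xi s) := M.g_symm s _ _
    have hu := M.xi_unit s
    simp only [map_sub, map_smul, LinearMap.sub_apply, LinearMap.smul_apply,
      smul_eq_mul, hsv, hu] at h1
    have h3 : M.g s (M.phi s v) (M.xi s) ^ 2 = 0 := by nlinarith [h1, h2]
    exact sq_eq_zero_iff.mp h3
  have hDTxi : ∀ s, M.g s (M.D M.T s) (M.xi s) = 0 := by
    intro s
    have hd := M.D_metric M.T M.xi s
    have hfun : (fun u => M.g u (M.T u) (M.xi u)) = fun _ => c := funext hslant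
    rw [hfun] at hd
    have h0 := hd.unique (hasDerivAt_const s c)
    rw [hDxi s] at h0
    simpa using h0
  have hkpos := F.kappa_pos
  have htpos := F.tau_pos
  have he2ne : F.e2 ≠ 0 := by rcases F.he2 with h | h <;> rw [h] <;> norm_num
  have he3ne : F.e3 ≠ 0 := by rcases F.he3 with h | h <;> rw [h] <;> norm_num
  have he1ne : e1 ≠ 0 := by rcases he1 with h | h <;> rw [h] <;> norm_num
  have habs1 : |e1| = 1 := by rcases he1 with h | h <;> rw [h] <;> norm_num
  have habs2 : |F.e2| = 1 := by rcases F.he2 with h | h <;> rw [h] <;> norm_num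
  have habs3 : |F.e3| = 1 := by rcases F.he3 with h | h <;> rw [h] <;> norm_num
  have he1sq : e1 ^ 2 = 1 := by rcases he1 with h | h <;> rw [h] <;> norm_num
  have he2sq : F.e2 ^ 2 = 1 := by rcases F.he2 with h | h <;> rw [h] <;> norm_num
  have he3sq : F.e3 ^ 2 = 1 := by rcases F.he3 with h | h <;> rw [h] <;> norm_num
  have hE2xi : ∀ s, M.g s (F.E2 s) (M.xi s) = 0 := by
    intro s
    have h := hDTxi s
    rw [F.frenet1 s] at h
    simp only [map_smul, LinearMap.smul_apply, smul_eq_mul] at h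
    rcases mul_eq_zero.mp h with h' | h'
    · exact absurd h' (mul_ne_zero (hkpos s).ne' he2ne)
    · exact h'
  have hkey : ∀ s, F.tau s * F.e3 * M.g s (F.E3 s) (M.xi s) = F.kappa s * e1 * c := by
    intro s
    have hd := M.D_metric F.E2 M.xi s
    have hfun : (fun u => M.g u (F.E2 u) (M.xi u)) = fun _ => (0:ℝ) := funext hE2xi
    rw [hfun] at hd
    have h0 := hd.unique (hasDerivAt_const s 0)
    rw [hDxi s, F.frenet2 s] at h0
    simp only [map_add, map_smul, map_zero, LinearMap.add_apply, LinearMap.smul_apply,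
      smul_eq_mul, hT s, hslant s] at h0
    linear_combination h0
  intro t
  obtain ⟨e, he⟩ := M.signature t
  have hfin : Module.Finite ℝ V := Module.Finite.of_basis e
  have hfr : Module.finrank ℝ V = 3 := by rw [Module.finrank_eq_card_basis e]; simp
  -- gram facts at t
  have gTT := hT t
  have gTxi := hslant t
  have gxiT : M.g t (M.xi t) (M.T t) = c := by rw [M.g_symm]; exact hslant t
  have gTE2 := F.T_E2 t
  have gE2T : M.g t (F.E2 t) (M.T t) = 0 := by rw [M.g_symm]; exact F.T_E2 t
  have gTE3 := F.T_E3 t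
  have gE3T : M.g t (F.E3 t) (M.T t) = 0 := by rw [M.g_symm]; exact F.T_E3 t
  have gE2E2 := F.E2_unit t
  have gE3E3 := F.E3_unit t
  have gE2E3 := F.E2_E3 t
  have gE3E2 : M.g t (F.E3 t) (F.E2 t) = 0 := by rw [M.g_symm]; exact F.E2_E3 t
  have gE2xi := hE2xi t
  have gxiE2 : M.g t (M.xi t) (F.E2 t) = 0 := by rw [M.g_symm]; exact hE2xi t
  have gxixi := M.xi_unit t
  set vv : Fin 3 → V := ![M.T t, F.E2 t, F.E3 t] with hvv
  have hv0 : vv 0 = M.T t := rfl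
  have hv1 : vv 1 = F.E2 t := rfl
  have hv2 : vv 2 = F.E3 t := rfl
  have hli : LinearIndependent ℝ vv := by
    rw [Fintype.linearIndependent_iff]
    intro f hf
    rw [Fin.sum_univ_three, hv0, hv1, hv2] at hf
    have h0 := congrArg (fun w => M.g t w (M.T t)) hf
    have h1 := congrArg (fun w => M.g t w (F.E2 t)) hf
    have h2 := congrArg (fun w => M.g t w (F.E3 t)) hf
    simp only [map_add, map_smul, LinearMap.add_apply, LinearMap.smul_apply, smul_eq_mul,
      map_zero, LinearMap.zero_apply, gTT, gTE2, gTE3, gE2T, gE3T, gE2E2, gE2E3, gE3E2, gE3E3,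
      mul_zero, add_zero, zero_add, mul_one] at h0 h1 h2
    intro i
    fin_cases i
    · exact (mul_eq_zero.mp h0).resolve_right he1ne
    · exact (mul_eq_zero.mp h1).resolve_right he2ne
    · exact (mul_eq_zero.mp h2).resolve_right he3ne
  have hcard : Fintype.card (Fin 3) = Module.finrank ℝ V := by simp [hfr]
  set B := basisOfLinearIndependentOfCardEqFinrank hli hcard with hB
  have hBc : ⇑B = vv := coe_basisOfLinearIndependentOfCardEqFinrank _ _
  have hexp : ∀ w : V, w = B.repr w 0 • M.T t + B.repr w 1 • F.E2 t + B.repr w 2 • F.E3 t := by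
    intro w
    have hsum := B.sum_repr w
    rw [Fin.sum_univ_three, hBc, hv0, hv1, hv2] at hsum
    exact hsum.symm
  obtain ⟨r0, r1, r2, hxis⟩ : ∃ r0 r1 r2 : ℝ,
      M.xi t = r0 • M.T t + r1 • F.E2 t + r2 • F.E3 t := ⟨_, _, _, hexp (M.xi t)⟩
  have p0 : r0 * e1 = c := by
    have h := gxiT
    rw [hxis] at h
    simpa only [map_add, map_smul, LinearMap.add_apply, LinearMap.smul_apply, smul_eq_mul,
      gTT, gE2T, gE3T, mul_zero, add_zero, zero_add] using h
  have p1 : r1 = 0 := by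
    have h := gxiE2
    rw [hxis] at h
    simp only [map_add, map_smul, LinearMap.add_apply, LinearMap.smul_apply, smul_eq_mul,
      gTE2, gE2E2, gE2E3, gE3E2, mul_zero, add_zero, zero_add] at h
    rcases mul_eq_zero.mp h with h' | h'
    · exact h'
    · exact absurd h' he2ne
  have p2 : M.g t (F.E3 t) (M.xi t) = r2 * F.e3 := by
    conv_lhs => rw [hxis]
    simp only [map_add, map_smul, LinearMap.smul_apply, smul_eq_mul,
      gE3T, gE3E2, gE3E3, mul_zero, add_zero, zero_add]
  have pxx : r0 ^ 2 * e1 + r1 ^ 2 * F.e2 + r2 ^ 2 * F.e3 = 1 := by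
    have h := gxixi
    rw [hxis] at h
    simp only [map_add, map_smul, LinearMap.add_apply, LinearMap.smul_apply, smul_eq_mul,
      gTT, gTE2, gTE3, gE2T, gE3T, gE2E2, gE2E3, gE3E2, gE3E3,
      mul_zero, add_zero, zero_add, mul_one] at h
    linear_combination h
  have hr0 : r0 = c * e1 := by linear_combination e1 * p0 - r0 * he1sq
  have pxx' : c ^ 2 * e1 + r2 ^ 2 * F.e3 = 1 := by
    rw [hr0, p1] at pxx
    linear_combination pxx - c ^ 2 * e1 * he1sq
  have hkey3 : F.tau t * r2 = F.kappa t * e1 * c := by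
    have h := hkey t
    rw [p2] at h
    linear_combination h - F.tau t * r2 * he3sq
  have hr2ne : r2 ≠ 0 := by
    intro h
    rw [h, mul_zero] at hkey3
    have hc : c = 0 := by
      rcases mul_eq_zero.mp hkey3.symm with h' | h'
      · rcases mul_eq_zero.mp h' with h'' | h''
        · exact absurd h'' (hkpos t).ne'
        · exact absurd h'' he1ne
      · exact h'
    rw [hc, h] at pxx'
    norm_num at pxx'
  have hr2sq' : r2 ^ 2 = F.e3 * e1 * (e1 - c ^ 2) := by
    linear_combination F.e3 * pxx' - r2 ^ 2 * he3sq - F.e3 * he1sq + F.e3 * c ^ 2 * e1 * he1sq - F.e3 * e1 * c ^ 2 * he1sq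
  have hr2pos : (0:ℝ) < r2 ^ 2 := by positivity
  have hr2sq : r2 ^ 2 = |e1 - c ^ 2| := by
    calc r2 ^ 2 = |r2 ^ 2| := (abs_of_pos hr2pos).symm
      _ = |F.e3 * e1 * (e1 - c ^ 2)| := by rw [hr2sq']
      _ = |e1 - c ^ 2| := by rw [abs_mul, abs_mul, habs3, habs1]; ring
  have hA : (0:ℝ) < |e1 - c ^ 2| := hr2sq ▸ hr2pos
  have hAne : e1 - c ^ 2 ≠ 0 := abs_pos.mp hA
  -- expansion of phi T
  obtain ⟨q0, q1, q2, hphiT⟩ : ∃ q0 q1 q2 : ℝ,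
      M.phi t (M.T t) = q0 • M.T t + q1 • F.E2 t + q2 • F.E3 t := ⟨_, _, _, hexp _⟩
  have hphiTT : M.g t (M.phi t (M.T t)) (M.T t) = 0 := by
    have h := M.compat t (M.T t) (M.phi t (M.T t))
    rw [M.phi_sq t (M.T t)] at h
    have hx := hphixi t (M.T t)
    have hsymm : M.g t (M.T t) (M.phi t (M.T t)) = M.g t (M.phi t (M.T t)) (M.T t) :=
      M.g_symm t _ _
    simp only [map_sub, map_smul, smul_eq_mul, hx, hsymm, gTxi, mul_zero, sub_zero] at h
    linarith [h]
  have hq0 : q0 = 0 := by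
    have h := hphiTT
    rw [hphiT] at h
    simp only [map_add, map_smul, LinearMap.add_apply, LinearMap.smul_apply, smul_eq_mul,
      gTT, gE2T, gE3T, mul_zero, add_zero, zero_add] at h
    exact (mul_eq_zero.mp h).resolve_right he1ne
  have hq2 : q2 = 0 := by
    have h := hphixi t (M.T t)
    rw [hphiT] at h
    simp only [map_add, LinearMap.add_apply, map_smul, LinearMap.smul_apply, smul_eq_mul,
      gTxi, gE2xi, p2, mul_zero, add_zero, zero_add, hq0, zero_mul] at h
    rcases mul_eq_zero.mp h with h' | h'
    · exact h'
    · exact absurd h' (mul_ne_zero hr2ne he3ne)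
  have hphiT2 : M.phi t (M.T t) = q1 • F.E2 t := by
    rw [hphiT, hq0, hq2]
    simp
  have hq1e : q1 ^ 2 * F.e2 = c ^ 2 - e1 := by
    have h := M.compat t (M.T t) (M.T t)
    rw [hphiT2, gTT, gTxi] at h
    simp only [map_smul, LinearMap.smul_apply, smul_eq_mul, gE2E2] at h
    linear_combination h
  have hq1ne : q1 ≠ 0 := by
    intro h0
    rw [h0] at hq1e
    apply hAne
    linear_combination hq1e
  have hq1sq' : q1 ^ 2 = F.e2 * (c ^ 2 - e1) := by
    linear_combination F.e2 * hq1e - q1 ^ 2 * he2sq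
  have hq1pos : (0:ℝ) < q1 ^ 2 := by positivity
  have hq1sq : q1 ^ 2 = |e1 - c ^ 2| := by
    calc q1 ^ 2 = |q1 ^ 2| := (abs_of_pos hq1pos).symm
      _ = |F.e2 * (c ^ 2 - e1)| := by rw [hq1sq']
      _ = |e1 - c ^ 2| := by rw [abs_mul, habs2, abs_sub_comm]; ring
  have hnum : M.g t (M.D M.T t) (M.phi t (M.T t)) = F.kappa t * q1 := by
    rw [F.frenet1 t, hphiT2]
    simp only [map_smul, LinearMap.smul_apply, smul_eq_mul, gE2E2]
    linear_combination F.kappa t * q1 * he2sq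
  have hδt : δ t = F.kappa t * q1 / |e1 - c ^ 2| := by rw [hδ t, hnum]
  have hsqA : Real.sqrt |e1 - c ^ 2| = |q1| := by
    rw [← hq1sq, Real.sqrt_sq_eq_abs]
  have hAA : Real.sqrt |e1 - c ^ 2| * Real.sqrt |e1 - c ^ 2| = |e1 - c ^ 2| :=
    Real.mul_self_sqrt hA.le
  have habsq1 : |q1| * |q1| = |e1 - c ^ 2| := by
    rw [← hsqA]; exact hAA
  constructor
  · rw [hδt, abs_div, abs_mul, abs_of_pos (hkpos t), abs_of_pos hA, hsqA]
    field_simp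
    linear_combination (-(F.kappa t)) * habsq1
  · have habsr2 : |r2| = Real.sqrt |e1 - c ^ 2| := by
      rw [← hr2sq, Real.sqrt_sq_eq_abs]
    have habsr2' : |r2| * |r2| = |e1 - c ^ 2| := by rw [habsr2]; exact hAA
    have h3abs : F.tau t * |r2| = F.kappa t * |c| := by
      have h := congrArg abs hkey3
      rw [abs_mul, abs_mul, abs_mul, abs_of_pos (htpos t), abs_of_pos (hkpos t), habs1] at h
      linarith [h]
    have hq1r2 : |q1| = |r2| := by rw [← hsqA, habsr2]
    have hr2absne : |r2| ≠ 0 := abs_ne_zero.mpr hr2ne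
    rw [hδt, abs_mul, abs_div, abs_mul, abs_of_pos (hkpos t), abs_of_pos hA]
    rw [hq1r2, ← habsr2']
    field_simp
    linear_combination h3abs
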